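/- In the network setup, let φ_h be a profile for each h ∈ H and suppose the continuity condition holds: φ_j(c_j t) = φ_i(c_i t) for every t ∈ ℝ and every (i,j) ∈ I×J. Then either c_h = 0 for all h ∈ H, or c_h ≠ 0 for all h ∈ H and all the speeds c_h have the same sign. In the latter case, for every (i,j) ∈ I×J: ℓ_j^± = ℓ_i^± =: ℓ^±; c_j^{-1} I_j = c_i^{-1} I_i; and c_j (g_j(ℓ) − g_j(ℓ⁻))/D_j(ℓ) = c_i (g_i(ℓ) − g_i(ℓ⁻))/D_i(ℓ) for every ℓ ∈ (ℓ⁻, ℓ⁺). If in addition the coupling condition (Tool) holds and the speeds are nonzero, then for every j ∈ J: c_j = Σ_{i∈I} α_{i,j} c_i, Σ_{j∈J} c_j = Σ_{i∈I} c_i, and Σ_{i∈I} α_{i,j} c_i/c_j = 1. -/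
import Mathlib


open Set Filter MeasureTheory
open scoped Topology Classical

/-- Assumption (f): `f ∈ C¹([0,1];ℝ)` is nonnegative, strictly concave, `f 0 = f 1 = 0`. -/
def FluxAssumption (f : ℝ → ℝ) : Prop :=
  ContDiffOn ℝ 1 f (Icc 0 1) ∧ StrictConcaveOn ℝ (Icc 0 1) f ∧
  (∀ x ∈ Icc (0:ℝ) 1, 0 ≤ f x) ∧ f 0 = 0 ∧ f 1 = 0

/-- Assumption (D): `D ∈ C¹([0,1];ℝ)` is nonnegative and positive on `(0,1)`. -/
def DiffAssumption (D : ℝ → ℝ) : Prop :=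
  ContDiffOn ℝ 1 D (Icc 0 1) ∧ (∀ x ∈ Icc (0:ℝ) 1, 0 ≤ D x) ∧
  (∀ x ∈ Ioo (0:ℝ) 1, 0 < D x)

/-- The wave speed `c = (f(ℓ⁺) - f(ℓ⁻))/(ℓ⁺ - ℓ⁻)`. -/
noncomputable def waveSpeed (f : ℝ → ℝ) (a b : ℝ) : ℝ := (f b - f a) / (b - a)

/-- The reduced flux `g(ρ) = f(ρ) - c ρ`. -/
noncomputable def redFlux (f : ℝ → ℝ) (a b ρ : ℝ) : ℝ := f ρ - waveSpeed f a b * ρ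

/-- A profile for data `f, D, ℓ⁻ = a, ℓ⁺ = b`: continuous, non-decreasing, with values in
`[a,b]`, limits `a` at `-∞` and `b` at `+∞`, `C²` on `I = {ξ | a < φ ξ < b}` with positive
derivative there, satisfying `D(φ) φ' = g(φ) - g(a)` on `I`. -/
def IsProfile (f D : ℝ → ℝ) (a b : ℝ) (φ : ℝ → ℝ) : Prop :=
  Continuous φ ∧ Monotone φ ∧ (∀ ξ, φ ξ ∈ Icc a b) ∧
  Tendsto φ atBot (𝓝 a) ∧ Tendsto φ atTop (𝓝 b) ∧
  ContDiffOn ℝ 2 φ {ξ | a < φ ξ ∧ φ ξ < b} ∧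
  ∀ ξ, a < φ ξ → φ ξ < b →
    0 < deriv φ ξ ∧ D (φ ξ) * deriv φ ξ = redFlux f a b (φ ξ) - redFlux f a b a

/-- Speed of road `h` given end–state functions. -/
noncomputable def spd {H : Type*} (f : H → ℝ → ℝ) (lm lp : H → ℝ) (h : H) : ℝ :=
  waveSpeed (f h) (lm h) (lp h)

/-- Reduced flux of road `h` given end–state functions. -/
noncomputable def gred {H : Type*} (f : H → ℝ → ℝ) (lm lp : H → ℝ) (h : H) (ρ : ℝ) : ℝ :=
  redFlux (f h) (lm h) (lp h) ρ

/-- The network setup: flux/diffusivity assumptions on each road, and coefficients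
`α i j ∈ (0,1]` with unit row sums. -/
def NetworkSetup {m n : ℕ} (f D : Fin m ⊕ Fin n → ℝ → ℝ) (α : Fin m → Fin n → ℝ) : Prop :=
  (∀ h, FluxAssumption (f h)) ∧ (∀ h, DiffAssumption (D h)) ∧
  (∀ i j, α i j ∈ Ioc (0:ℝ) 1) ∧ (∀ i, ∑ j, α i j = 1)

/-- Admissible end states: `0 ≤ ℓ_h⁻ < ℓ_h⁺ ≤ 1` for every road. -/
def EndStates {H : Type*} (lm lp : H → ℝ) : Prop :=
  ∀ h, 0 ≤ lm h ∧ lm h < lp h ∧ lp h ≤ 1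

/-- The coupling condition (Tool):
`c_j φ_j(c_j t) + g_j(ℓ_j⁻) = ∑_i α_{i,j} (c_i φ_i(c_i t) + g_i(ℓ_i⁻))` for all `t, j`. -/
def Tool {m n : ℕ} (f : Fin m ⊕ Fin n → ℝ → ℝ) (α : Fin m → Fin n → ℝ)
    (lm lp : Fin m ⊕ Fin n → ℝ) (φ : Fin m ⊕ Fin n → ℝ → ℝ) : Prop :=
  ∀ t : ℝ, ∀ j : Fin n,
    spd f lm lp (Sum.inr j) * φ (Sum.inr j) (spd f lm lp (Sum.inr j) * t)
      + gred f lm lp (Sum.inr j) (lm (Sum.inr j))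
    = ∑ i : Fin m, α i j *
        (spd f lm lp (Sum.inl i) * φ (Sum.inl i) (spd f lm lp (Sum.inl i) * t)
          + gred f lm lp (Sum.inl i) (lm (Sum.inl i)))

/-- A traveling wave of the network problem at profile level: a family of profiles
satisfying the coupling condition (Tool). -/
def IsTravelingWave {m n : ℕ} (f D : Fin m ⊕ Fin n → ℝ → ℝ) (α : Fin m → Fin n → ℝ)
    (lm lp : Fin m ⊕ Fin n → ℝ) (φ : Fin m ⊕ Fin n → ℝ → ℝ) : Prop :=
  (∀ h, IsProfile (f h) (D h) (lm h) (lp h) (φ h)) ∧ Tool f α lm lp φ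

/-- `L_{i,j}⁻`: `ℓ_i⁻` if `c_i c_j ≥ 0`, and `ℓ_i⁺` otherwise. -/
noncomputable def Lminus {m n : ℕ} (f : Fin m ⊕ Fin n → ℝ → ℝ)
    (lm lp : Fin m ⊕ Fin n → ℝ) (i : Fin m) (j : Fin n) : ℝ :=
  if 0 ≤ spd f lm lp (Sum.inl i) * spd f lm lp (Sum.inr j) then lm (Sum.inl i)
  else lp (Sum.inl i)

/-- `L_{i,j}⁺`: `ℓ_i⁺` if `c_i c_j ≥ 0`, and `ℓ_i⁻` otherwise. -/
noncomputable def Lplus {m n : ℕ} (f : Fin m ⊕ Fin n → ℝ → ℝ)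
    (lm lp : Fin m ⊕ Fin n → ℝ) (i : Fin m) (j : Fin n) : ℝ :=
  if 0 ≤ spd f lm lp (Sum.inl i) * spd f lm lp (Sum.inr j) then lp (Sum.inl i)
  else lm (Sum.inl i)

/-- `k_j = ∑_{i ∈ I₀ᶜ} A_{i,j} L_{i,j}⁻ - ℓ_j⁻` with `A_{i,j} = α_{i,j} c_i / c_j`. -/
noncomputable def kconst {m n : ℕ} (f : Fin m ⊕ Fin n → ℝ → ℝ) (α : Fin m → Fin n → ℝ)
    (lm lp : Fin m ⊕ Fin n → ℝ) (j : Fin n) : ℝ :=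
  (∑ i ∈ Finset.univ.filter (fun i : Fin m => spd f lm lp (Sum.inl i) ≠ 0),
      (α i j * (spd f lm lp (Sum.inl i) / spd f lm lp (Sum.inr j))) * Lminus f lm lp i j)
    - lm (Sum.inr j)

section Aux

/-- Limits of `t ↦ φ (c t)` at `±∞` depending on the sign of `c`. -/
lemma tw_limits {φ : ℝ → ℝ} {a b : ℝ} (hbot : Tendsto φ atBot (𝓝 a))
    (htop : Tendsto φ atTop (𝓝 b)) (c : ℝ) :
    (0 < c → Tendsto (fun t => φ (c * t)) atTop (𝓝 b) ∧
      Tendsto (fun t => φ (c * t)) atBot (𝓝 a)) ∧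
    (c < 0 → Tendsto (fun t => φ (c * t)) atTop (𝓝 a) ∧
      Tendsto (fun t => φ (c * t)) atBot (𝓝 b)) := by
  constructor
  · intro hc
    exact ⟨htop.comp ((tendsto_const_mul_atTop_of_pos hc).2 tendsto_id),
      hbot.comp ((tendsto_const_mul_atBot_of_pos hc).2 tendsto_id)⟩
  · intro hc
    exact ⟨hbot.comp ((tendsto_const_mul_atBot_of_neg hc).2 tendsto_id),
      htop.comp ((tendsto_const_mul_atTop_of_neg hc).2 tendsto_id)⟩

end Aux

/-- Consequences of the continuity condition `φ_j(c_j t) = φ_i(c_i t)` at the node. -/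
theorem stmt15 (m n : ℕ) (hm : 0 < m) (hn : 0 < n)
    (f D : Fin m ⊕ Fin n → ℝ → ℝ) (α : Fin m → Fin n → ℝ)
    (hnet : NetworkSetup f D α)
    (lm lp : Fin m ⊕ Fin n → ℝ) (hends : EndStates lm lp)
    (φ : Fin m ⊕ Fin n → ℝ → ℝ)
    (hφ : ∀ h, IsProfile (f h) (D h) (lm h) (lp h) (φ h))
    (hcont : ∀ (t : ℝ) (i : Fin m) (j : Fin n),
      φ (Sum.inr j) (spd f lm lp (Sum.inr j) * t)
        = φ (Sum.inl i) (spd f lm lp (Sum.inl i) * t)) :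
    ((∀ h, spd f lm lp h = 0) ∨
      ((∀ h, spd f lm lp h ≠ 0) ∧
        ((∀ h, 0 < spd f lm lp h) ∨ (∀ h, spd f lm lp h < 0)))) ∧
    ((∃ h, spd f lm lp h ≠ 0) →
      ∀ (i : Fin m) (j : Fin n),
        lm (Sum.inr j) = lm (Sum.inl i) ∧ lp (Sum.inr j) = lp (Sum.inl i) ∧
        (fun x => (spd f lm lp (Sum.inr j))⁻¹ * x) ''
            {ξ | lm (Sum.inr j) < φ (Sum.inr j) ξ ∧ φ (Sum.inr j) ξ < lp (Sum.inr j)}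
          = (fun x => (spd f lm lp (Sum.inl i))⁻¹ * x) ''
              {ξ | lm (Sum.inl i) < φ (Sum.inl i) ξ ∧ φ (Sum.inl i) ξ < lp (Sum.inl i)} ∧
        ∀ ℓ ∈ Ioo (lm (Sum.inl i)) (lp (Sum.inl i)),
          spd f lm lp (Sum.inr j) *
              ((gred f lm lp (Sum.inr j) ℓ - gred f lm lp (Sum.inr j) (lm (Sum.inr j)))
                / D (Sum.inr j) ℓ)
            = spd f lm lp (Sum.inl i) *
                ((gred f lm lp (Sum.inl i) ℓ - gred f lm lp (Sum.inl i) (lm (Sum.inl i)))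
                  / D (Sum.inl i) ℓ)) ∧
    (Tool f α lm lp φ → (∀ h, spd f lm lp h ≠ 0) →
      ∀ j : Fin n,
        spd f lm lp (Sum.inr j) = (∑ i : Fin m, α i j * spd f lm lp (Sum.inl i)) ∧
        (∑ j' : Fin n, spd f lm lp (Sum.inr j')) = (∑ i : Fin m, spd f lm lp (Sum.inl i)) ∧
        (∑ i : Fin m, α i j * (spd f lm lp (Sum.inl i) / spd f lm lp (Sum.inr j))) = 1) := by
  set c := spd f lm lp with hcdef
  have hab : ∀ h, lm h < lp h := fun h => (hends h).2.1
  have hφc : ∀ h, Continuous (φ h) := fun h => (hφ h).1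
  have hφbot : ∀ h, Tendsto (φ h) atBot (𝓝 (lm h)) := fun h => (hφ h).2.2.2.1
  have hφtop : ∀ h, Tendsto (φ h) atTop (𝓝 (lp h)) := fun h => (hφ h).2.2.2.2.1
  have i0 : Fin m := ⟨0, hm⟩
  have j0 : Fin n := ⟨0, hn⟩
  have hlim := fun h => tw_limits (hφbot h) (hφtop h) (c h)
  have heqf : ∀ (i : Fin m) (j : Fin n),
      (fun t => φ (Sum.inr j) (c (Sum.inr j) * t))
        = (fun t => φ (Sum.inl i) (c (Sum.inl i) * t)) :=
    fun i j => funext fun t => hcont t i j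
  -- pairwise sign comparison
  have pair : ∀ (i : Fin m) (j : Fin n),
      (0 < c (Sum.inl i) ↔ 0 < c (Sum.inr j)) ∧ (c (Sum.inl i) < 0 ↔ c (Sum.inr j) < 0) := by
    intro i j
    have habi := hab (Sum.inl i)
    have habj := hab (Sum.inr j)
    rcases lt_trichotomy (c (Sum.inl i)) 0 with hi | hi | hi <;>
      rcases lt_trichotomy (c (Sum.inr j)) 0 with hj | hj | hj
    · exact ⟨by constructor <;> intro h <;> linarith,
        by constructor <;> intro h <;> linarith⟩
    · -- i neg, j zero : the node function is constant
      exfalso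
      have h1 : Tendsto (fun t => φ (Sum.inr j) (c (Sum.inr j) * t)) atTop
          (𝓝 (φ (Sum.inr j) 0)) := by
        simp only [hj, zero_mul]; exact tendsto_const_nhds
      have h2 : Tendsto (fun t => φ (Sum.inr j) (c (Sum.inr j) * t)) atBot
          (𝓝 (φ (Sum.inr j) 0)) := by
        simp only [hj, zero_mul]; exact tendsto_const_nhds
      have l1 : Tendsto (fun t => φ (Sum.inr j) (c (Sum.inr j) * t)) atTop
          (𝓝 (lm (Sum.inl i))) := by
        rw [heqf i j]; exact ((hlim (Sum.inl i)).2 hi).1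
      have l2 : Tendsto (fun t => φ (Sum.inr j) (c (Sum.inr j) * t)) atBot
          (𝓝 (lp (Sum.inl i))) := by
        rw [heqf i j]; exact ((hlim (Sum.inl i)).2 hi).2
      have e1 := tendsto_nhds_unique h1 l1
      have e2 := tendsto_nhds_unique h2 l2
      linarith
    · -- i neg, j pos
      exfalso
      have l1 : Tendsto (fun t => φ (Sum.inr j) (c (Sum.inr j) * t)) atTop
          (𝓝 (lm (Sum.inl i))) := by
        rw [heqf i j]; exact ((hlim (Sum.inl i)).2 hi).1
      have l2 : Tendsto (fun t => φ (Sum.inr j) (c (Sum.inr j) * t)) atBot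
          (𝓝 (lp (Sum.inl i))) := by
        rw [heqf i j]; exact ((hlim (Sum.inl i)).2 hi).2
      have e1 := tendsto_nhds_unique ((hlim (Sum.inr j)).1 hj).1 l1
      have e2 := tendsto_nhds_unique ((hlim (Sum.inr j)).1 hj).2 l2
      linarith
    · -- i zero, j neg
      exfalso
      have l1 : Tendsto (fun t => φ (Sum.inr j) (c (Sum.inr j) * t)) atTop
          (𝓝 (φ (Sum.inl i) 0)) := by
        rw [heqf i j]; simp only [hi, zero_mul]; exact tendsto_const_nhds
      have l2 : Tendsto (fun t => φ (Sum.inr j) (c (Sum.inr j) * t)) atBot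
          (𝓝 (φ (Sum.inl i) 0)) := by
        rw [heqf i j]; simp only [hi, zero_mul]; exact tendsto_const_nhds
      have e1 := tendsto_nhds_unique ((hlim (Sum.inr j)).2 hj).1 l1
      have e2 := tendsto_nhds_unique ((hlim (Sum.inr j)).2 hj).2 l2
      linarith
    · exact ⟨by constructor <;> intro h <;> linarith,
        by constructor <;> intro h <;> linarith⟩
    · -- i zero, j pos
      exfalso
      have l1 : Tendsto (fun t => φ (Sum.inr j) (c (Sum.inr j) * t)) atTop
          (𝓝 (φ (Sum.inl i) 0)) := by
        rw [heqf i j]; simp only [hi, zero_mul]; exact tendsto_const_nhds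
      have l2 : Tendsto (fun t => φ (Sum.inr j) (c (Sum.inr j) * t)) atBot
          (𝓝 (φ (Sum.inl i) 0)) := by
        rw [heqf i j]; simp only [hi, zero_mul]; exact tendsto_const_nhds
      have e1 := tendsto_nhds_unique ((hlim (Sum.inr j)).1 hj).1 l1
      have e2 := tendsto_nhds_unique ((hlim (Sum.inr j)).1 hj).2 l2
      linarith
    · -- i pos, j neg
      exfalso
      have l1 : Tendsto (fun t => φ (Sum.inr j) (c (Sum.inr j) * t)) atTop
          (𝓝 (lp (Sum.inl i))) := by
        rw [heqf i j]; exact ((hlim (Sum.inl i)).1 hi).1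
      have l2 : Tendsto (fun t => φ (Sum.inr j) (c (Sum.inr j) * t)) atBot
          (𝓝 (lm (Sum.inl i))) := by
        rw [heqf i j]; exact ((hlim (Sum.inl i)).1 hi).2
      have e1 := tendsto_nhds_unique ((hlim (Sum.inr j)).2 hj).1 l1
      have e2 := tendsto_nhds_unique ((hlim (Sum.inr j)).2 hj).2 l2
      linarith
    · -- i pos, j zero
      exfalso
      have h1 : Tendsto (fun t => φ (Sum.inr j) (c (Sum.inr j) * t)) atTop
          (𝓝 (φ (Sum.inr j) 0)) := by
        simp only [hj, zero_mul]; exact tendsto_const_nhds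
      have h2 : Tendsto (fun t => φ (Sum.inr j) (c (Sum.inr j) * t)) atBot
          (𝓝 (φ (Sum.inr j) 0)) := by
        simp only [hj, zero_mul]; exact tendsto_const_nhds
      have l1 : Tendsto (fun t => φ (Sum.inr j) (c (Sum.inr j) * t)) atTop
          (𝓝 (lp (Sum.inl i))) := by
        rw [heqf i j]; exact ((hlim (Sum.inl i)).1 hi).1
      have l2 : Tendsto (fun t => φ (Sum.inr j) (c (Sum.inr j) * t)) atBot
          (𝓝 (lm (Sum.inl i))) := by
        rw [heqf i j]; exact ((hlim (Sum.inl i)).1 hi).2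
      have e1 := tendsto_nhds_unique h1 l1
      have e2 := tendsto_nhds_unique h2 l2
      linarith
    · exact ⟨by constructor <;> intro h <;> linarith,
        by constructor <;> intro h <;> linarith⟩
  have hiff : ∀ h h', (0 < c h ↔ 0 < c h') ∧ (c h < 0 ↔ c h' < 0) := by
    intro h h'
    have key : ∀ h'', (0 < c h'' ↔ 0 < c (Sum.inr j0)) ∧ (c h'' < 0 ↔ c (Sum.inr j0) < 0) := by
      intro h''
      cases h'' with
      | inl i => exact pair i j0
      | inr j =>
        exact ⟨(pair i0 j).1.symm.trans (pair i0 j0).1,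
          (pair i0 j).2.symm.trans (pair i0 j0).2⟩
    exact ⟨(key h).1.trans (key h').1.symm, (key h).2.trans (key h').2.symm⟩
  -- Part 1
  have alt : (∀ h, c h = 0) ∨ ((∀ h, c h ≠ 0) ∧ ((∀ h, 0 < c h) ∨ (∀ h, c h < 0))) := by
    rcases lt_trichotomy (c (Sum.inl i0)) 0 with h0 | h0 | h0
    · exact Or.inr ⟨fun h => ne_of_lt ((hiff h (Sum.inl i0)).2.mpr h0),
        Or.inr fun h => (hiff h (Sum.inl i0)).2.mpr h0⟩
    · refine Or.inl fun h => ?_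
      rcases lt_trichotomy (c h) 0 with hh | hh | hh
      · have := (hiff h (Sum.inl i0)).2.mp hh; linarith
      · exact hh
      · have := (hiff h (Sum.inl i0)).1.mp hh; linarith
    · exact Or.inr ⟨fun h => ne_of_gt ((hiff h (Sum.inl i0)).1.mpr h0),
        Or.inl fun h => (hiff h (Sum.inl i0)).1.mpr h0⟩
  -- equal end states when speeds are nonzero
  have hends_eq : ∀ (i : Fin m) (j : Fin n), c (Sum.inl i) ≠ 0 →
      lm (Sum.inr j) = lm (Sum.inl i) ∧ lp (Sum.inr j) = lp (Sum.inl i) := by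
    intro i j hi
    rcases hi.lt_or_gt with hi | hi
    · have hj : c (Sum.inr j) < 0 := (pair i j).2.mp hi
      have l1 : Tendsto (fun t => φ (Sum.inr j) (c (Sum.inr j) * t)) atTop
          (𝓝 (lm (Sum.inl i))) := by
        rw [heqf i j]; exact ((hlim (Sum.inl i)).2 hi).1
      have l2 : Tendsto (fun t => φ (Sum.inr j) (c (Sum.inr j) * t)) atBot
          (𝓝 (lp (Sum.inl i))) := by
        rw [heqf i j]; exact ((hlim (Sum.inl i)).2 hi).2
      exact ⟨tendsto_nhds_unique ((hlim (Sum.inr j)).2 hj).1 l1,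
        tendsto_nhds_unique ((hlim (Sum.inr j)).2 hj).2 l2⟩
    · have hj : 0 < c (Sum.inr j) := (pair i j).1.mp hi
      have l1 : Tendsto (fun t => φ (Sum.inr j) (c (Sum.inr j) * t)) atTop
          (𝓝 (lp (Sum.inl i))) := by
        rw [heqf i j]; exact ((hlim (Sum.inl i)).1 hi).1
      have l2 : Tendsto (fun t => φ (Sum.inr j) (c (Sum.inr j) * t)) atBot
          (𝓝 (lm (Sum.inl i))) := by
        rw [heqf i j]; exact ((hlim (Sum.inl i)).1 hi).2
      exact ⟨tendsto_nhds_unique ((hlim (Sum.inr j)).1 hj).2 l2,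
        tendsto_nhds_unique ((hlim (Sum.inr j)).1 hj).1 l1⟩
  refine ⟨alt, ?_, ?_⟩
  · -- Part 2
    intro hex i j
    have hnz : ∀ h, c h ≠ 0 := by
      rcases alt with hz | hnz
      · obtain ⟨h, hh⟩ := hex; exact absurd (hz h) hh
      · exact hnz.1
    have hi := hnz (Sum.inl i)
    have hj := hnz (Sum.inr j)
    obtain ⟨ha, hb⟩ := hends_eq i j hi
    have himg : ∀ (h : Fin m ⊕ Fin n), c h ≠ 0 →
        (fun x => (c h)⁻¹ * x) '' {ξ | lm h < φ h ξ ∧ φ h ξ < lp h}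
          = {t | lm h < φ h (c h * t) ∧ φ h (c h * t) < lp h} := by
      intro h hh
      ext t
      simp only [mem_image, mem_setOf_eq]
      constructor
      · rintro ⟨ξ, hξ, rfl⟩
        rwa [mul_inv_cancel_left₀ hh]
      · intro ht
        exact ⟨c h * t, ht, inv_mul_cancel_left₀ hh _⟩
    refine ⟨ha, hb, ?_, ?_⟩
    · rw [himg _ hj, himg _ hi]
      ext t
      simp only [mem_setOf_eq]
      rw [hcont t i j, ha, hb]
    · -- the flux identity
      intro ℓ hℓ
      obtain ⟨hℓ1, hℓ2⟩ := hℓ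
      have hℓ01 : ℓ ∈ Ioo (0:ℝ) 1 :=
        ⟨lt_of_le_of_lt (hends (Sum.inl i)).1 hℓ1, lt_of_lt_of_le hℓ2 (hends (Sum.inl i)).2.2⟩
      have hDi : 0 < D (Sum.inl i) ℓ := (hnet.2.1 (Sum.inl i)).2.2 ℓ hℓ01
      have hDj : 0 < D (Sum.inr j) ℓ := (hnet.2.1 (Sum.inr j)).2.2 ℓ hℓ01
      -- find t with φ_i (c_i t) = ℓ
      have hucont : Continuous (fun t : ℝ => φ (Sum.inl i) (c (Sum.inl i) * t)) :=
        (hφc (Sum.inl i)).comp (continuous_const.mul continuous_id)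
      have hex1 : ∃ t1, φ (Sum.inl i) (c (Sum.inl i) * t1) < ℓ := by
        rcases hi.lt_or_gt with hi' | hi'
        · exact (Tendsto.eventually_lt_const hℓ1 ((hlim (Sum.inl i)).2 hi').1).exists
        · exact (Tendsto.eventually_lt_const hℓ1 ((hlim (Sum.inl i)).1 hi').2).exists
      have hex2 : ∃ t2, ℓ < φ (Sum.inl i) (c (Sum.inl i) * t2) := by
        rcases hi.lt_or_gt with hi' | hi'
        · exact (Tendsto.eventually_const_lt hℓ2 ((hlim (Sum.inl i)).2 hi').2).exists
        · exact (Tendsto.eventually_const_lt hℓ2 ((hlim (Sum.inl i)).1 hi').1).exists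
      obtain ⟨t1, ht1⟩ := hex1
      obtain ⟨t2, ht2⟩ := hex2
      obtain ⟨t, ht⟩ := intermediate_value_univ t1 t2 hucont ⟨ht1.le, ht2.le⟩
      have hti : φ (Sum.inl i) (c (Sum.inl i) * t) = ℓ := ht
      have htj : φ (Sum.inr j) (c (Sum.inr j) * t) = ℓ := (hcont t i j).trans hti
      -- differentiability on the open set
      have hdiff : ∀ (h : Fin m ⊕ Fin n) (ξ : ℝ), lm h < φ h ξ → φ h ξ < lp h →
          DifferentiableAt ℝ (φ h) ξ := by
        intro h ξ h1 h2
        have hopen : IsOpen {ξ | lm h < φ h ξ ∧ φ h ξ < lp h} :=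
          isOpen_Ioo.preimage (hφc h)
        exact ((hφ h).2.2.2.2.2.1.differentiableOn (by norm_num)).differentiableAt
          (hopen.mem_nhds ⟨h1, h2⟩)
      have hdiffi : DifferentiableAt ℝ (φ (Sum.inl i)) (c (Sum.inl i) * t) :=
        hdiff _ _ (hti ▸ hℓ1) (hti ▸ hℓ2)
      have hdiffj : DifferentiableAt ℝ (φ (Sum.inr j)) (c (Sum.inr j) * t) :=
        hdiff _ _ (by rw [htj, ha]; exact hℓ1) (by rw [htj, hb]; exact hℓ2)
      have hdi : HasDerivAt (fun s => φ (Sum.inl i) (c (Sum.inl i) * s))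
          (deriv (φ (Sum.inl i)) (c (Sum.inl i) * t) * (c (Sum.inl i) * 1)) t :=
        HasDerivAt.comp t hdiffi.hasDerivAt ((hasDerivAt_id t).const_mul _)
      have hdj : HasDerivAt (fun s => φ (Sum.inr j) (c (Sum.inr j) * s))
          (deriv (φ (Sum.inr j)) (c (Sum.inr j) * t) * (c (Sum.inr j) * 1)) t :=
        HasDerivAt.comp t hdiffj.hasDerivAt ((hasDerivAt_id t).const_mul _)
      have hdj' : HasDerivAt (fun s => φ (Sum.inl i) (c (Sum.inl i) * s))
          (deriv (φ (Sum.inr j)) (c (Sum.inr j) * t) * (c (Sum.inr j) * 1)) t := by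
        rw [← heqf i j]; exact hdj
      have huniq := hdj'.unique hdi
      -- the ODE at the common point
      have hodei := (hφ (Sum.inl i)).2.2.2.2.2.2 (c (Sum.inl i) * t)
        (hti ▸ hℓ1) (hti ▸ hℓ2)
      have hodej := (hφ (Sum.inr j)).2.2.2.2.2.2 (c (Sum.inr j) * t)
        (by rw [htj, ha]; exact hℓ1) (by rw [htj, hb]; exact hℓ2)
      have ei := hodei.2
      have ej := hodej.2
      rw [hti] at ei
      rw [htj] at ej
      simp only [gred]
      rw [← ei, ← ej, mul_div_cancel_left₀ _ hDj.ne', mul_div_cancel_left₀ _ hDi.ne']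
      linear_combination huniq
  · -- Part 3
    intro htool hnz j
    have hS : ∀ (j' : Fin n), c (Sum.inr j') = ∑ i, α i j' * c (Sum.inl i) := by
      intro j'
      have hj' := hnz (Sum.inr j')
      have key : ∀ t : ℝ, (c (Sum.inr j') - ∑ i, α i j' * c (Sum.inl i))
            * φ (Sum.inr j') (c (Sum.inr j') * t)
          = (∑ i, α i j' * gred f lm lp (Sum.inl i) (lm (Sum.inl i)))
            - gred f lm lp (Sum.inr j') (lm (Sum.inr j')) := by
        intro t
        have h1 := htool t j'
        rw [← hcdef] at h1
        have h2 : ∑ i, α i j' * (c (Sum.inl i) * φ (Sum.inl i) (c (Sum.inl i) * t)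
              + gred f lm lp (Sum.inl i) (lm (Sum.inl i)))
            = (∑ i, α i j' * c (Sum.inl i)) * φ (Sum.inr j') (c (Sum.inr j') * t)
              + ∑ i, α i j' * gred f lm lp (Sum.inl i) (lm (Sum.inl i)) := by
          rw [Finset.sum_mul, ← Finset.sum_add_distrib]
          refine Finset.sum_congr rfl fun i _ => ?_
          rw [← hcont t i j']
          ring
        rw [h2] at h1
        linear_combination h1
      -- two distinct values of the profile
      have habj := hab (Sum.inr j')
      set mid := (lm (Sum.inr j') + lp (Sum.inr j')) / 2 with hmid
      have hm1 : lm (Sum.inr j') < mid := by rw [hmid]; linarith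
      have hm2 : mid < lp (Sum.inr j') := by rw [hmid]; linarith
      have hex1 : ∃ t1, φ (Sum.inr j') (c (Sum.inr j') * t1) < mid := by
        rcases hj'.lt_or_gt with h' | h'
        · exact (Tendsto.eventually_lt_const hm1 ((hlim (Sum.inr j')).2 h').1).exists
        · exact (Tendsto.eventually_lt_const hm1 ((hlim (Sum.inr j')).1 h').2).exists
      have hex2 : ∃ t2, mid < φ (Sum.inr j') (c (Sum.inr j') * t2) := by
        rcases hj'.lt_or_gt with h' | h'
        · exact (Tendsto.eventually_const_lt hm2 ((hlim (Sum.inr j')).2 h').2).exists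
        · exact (Tendsto.eventually_const_lt hm2 ((hlim (Sum.inr j')).1 h').1).exists
      obtain ⟨t1, ht1⟩ := hex1
      obtain ⟨t2, ht2⟩ := hex2
      have hzero : (c (Sum.inr j') - ∑ i, α i j' * c (Sum.inl i))
          * (φ (Sum.inr j') (c (Sum.inr j') * t1) - φ (Sum.inr j') (c (Sum.inr j') * t2))
          = 0 := by
        linear_combination (key t1) - (key t2)
      rcases mul_eq_zero.mp hzero with h | h
      · linarith [sub_eq_zero.mp h]
      · exfalso
        have : φ (Sum.inr j') (c (Sum.inr j') * t1)
            < φ (Sum.inr j') (c (Sum.inr j') * t2) := lt_trans ht1 ht2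
        linarith [sub_eq_zero.mp h]
    refine ⟨hS j, ?_, ?_⟩
    · calc (∑ j' : Fin n, c (Sum.inr j'))
          = ∑ j' : Fin n, ∑ i : Fin m, α i j' * c (Sum.inl i) :=
            Finset.sum_congr rfl fun j' _ => hS j'
        _ = ∑ i : Fin m, ∑ j' : Fin n, α i j' * c (Sum.inl i) := Finset.sum_comm
        _ = ∑ i : Fin m, c (Sum.inl i) := by
            refine Finset.sum_congr rfl fun i _ => ?_
            rw [← Finset.sum_mul, hnet.2.2.2 i, one_mul]
    · have hdiv : (∑ i : Fin m, α i j * (c (Sum.inl i) / c (Sum.inr j)))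
          = (∑ i : Fin m, α i j * c (Sum.inl i)) / c (Sum.inr j) := by
        rw [Finset.sum_div]
        exact Finset.sum_congr rfl fun i _ => (mul_div_assoc _ _ _).symm
      rw [hdiv, ← hS j, div_self (hnz (Sum.inr j))]
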